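/- Let G be a connected loopless multigraph on a finite vertex set V. Then the Laurent polynomial T_G(−t,−1/t) has top degree exactly |V|−1: the coefficient of t^{|V|−1} equals (−1)^{|V|−1}, and the coefficient of t^i is 0 for every i ≥ |V|. -/

import Mathlib

open LaurentPolynomial Finset

/-- Number of connected components of the simple graph on `V` with edge set `s`
(isolated vertices count as components). -/
noncomputable def numComponents (V : Type*) (s : Set (Sym2 V)) : ℕ :=
  Nat.card (SimpleGraph.fromEdgeSet s).ConnectedComponent

/-- The evaluation `T_G(-t, -1/t)` of the Tutte polynomial of the multigraph
given by `ε : E → Sym2 V`, as a Laurent polynomial in `ℤ[t,t⁻¹]`. -/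
noncomputable def tutteEval {V E : Type*} [Fintype V] [Fintype E]
    (ε : E → Sym2 V) : LaurentPolynomial ℤ :=
  ∑ F : Finset E,
    (-T 1 - 1) ^ (numComponents V (ε '' ↑F) - numComponents V (Set.range ε)) *
      (-T (-1) - 1) ^ (F.card + numComponents V (ε '' ↑F) - Fintype.card V)

/-- `P(m) = 1 - t⁻¹ + t⁻² - ⋯ ± t^{-(m-1)}`. -/
noncomputable def Ppoly (m : ℕ) : LaurentPolynomial ℤ :=
  ∑ i ∈ Finset.range m, (-T (-1)) ^ i

section
variable {V E : Type*} [Fintype V] [DecidableEq V] [Fintype E]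

/-- The edge set of the spanning simple graph of the multigraph `ε : E → Sym2 V`. -/
noncomputable def spanningEdges (ε : E → Sym2 V) : Finset (Sym2 V) :=
  Finset.image ε Finset.univ

/-- The multiplicity of an edge `e` of the spanning simple graph. -/
noncomputable def edgeMult (ε : E → Sym2 V) (e : Sym2 V) : ℕ :=
  Nat.card {f : E // ε f = e}

/-- `n(j)`: the number of edges of the spanning simple graph of multiplicity `≥ j`. -/
noncomputable def nMult (ε : E → Sym2 V) (j : ℕ) : ℕ :=
  Nat.card {e : Sym2 V // e ∈ spanningEdges ε ∧ j ≤ edgeMult ε e}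

/-- The number of triangles in the spanning simple graph. -/
noncomputable def numTriangles (ε : E → Sym2 V) : ℕ :=
  Nat.card {s : Finset V // s.card = 3 ∧
    ∀ u ∈ s, ∀ v ∈ s, u ≠ v → s(u, v) ∈ spanningEdges ε}
end


lemma expandLem (a b : ℕ) :
    ((-T 1 - 1 : LaurentPolynomial ℤ)^a * (-T (-1) - 1)^b)
      = C ((-1:ℤ)^(a+b)) * T (-(b:ℤ)) * (T 1 + 1)^(a+b) := by
  have key : (T (-1) : LaurentPolynomial ℤ) * T 1 = 1 := by
    rw [← T_add]; norm_num
  have h1 : (-T 1 - 1 : LaurentPolynomial ℤ) = -1 * (T 1 + 1) := by ring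
  have h2 : (-T (-1) - 1 : LaurentPolynomial ℤ) = -1 * (T (-1) * (T 1 + 1)) := by
    linear_combination key
  have h4 : (C ((-1:ℤ)^(a+b)) : LaurentPolynomial ℤ) = (-1)^(a+b) := by
    rw [map_pow, map_neg, map_one]
  have h5 : (T (-1) : LaurentPolynomial ℤ)^b = T (-(b:ℤ)) := by
    rw [T_pow]; norm_num
  rw [h1, h2, h4, mul_pow, mul_pow, mul_pow, h5]
  ring

-- coefficient of (T 1 + 1)^m
lemma T1add_eq (m : ℕ) : ((T 1 + 1 : LaurentPolynomial ℤ))^m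
    = Polynomial.toLaurent ((Polynomial.X + 1)^m) := by
  rw [map_pow, map_add, Polynomial.toLaurent_X, map_one]

lemma coeff_toLaurent_nonneg (p : Polynomial ℤ) (k : ℕ) :
    (Polynomial.toLaurent p).coeff (k : ℤ) = p.coeff k := by
  show (p.toFinsupp.coeff.mapDomain Nat.castEmbedding) (k : ℤ) = _
  exact Finsupp.mapDomain_apply Nat.castEmbedding.injective _ _

lemma coeff_T1add_pow_self (m : ℕ) : (((T 1 + 1 : LaurentPolynomial ℤ))^m).coeff (m : ℤ) = 1 := by
  rw [T1add_eq, coeff_toLaurent_nonneg]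
  have hm : (Polynomial.X + 1 : Polynomial ℤ).Monic := by
    simpa using (Polynomial.monic_X_add_C (1:ℤ))
  have := (hm.pow m).coeff_natDegree
  have hd : (Polynomial.X + 1 : Polynomial ℤ).natDegree = 1 := by
    simpa using Polynomial.natDegree_X_add_C (1:ℤ)
  rwa [Polynomial.natDegree_pow, hd, mul_one] at this

lemma coeff_T1add_pow_gt (m : ℕ) (j : ℤ) (hj : (m:ℤ) < j) :
    (((T 1 + 1 : LaurentPolynomial ℤ))^m).coeff j = 0 := by
  rw [T1add_eq]
  apply Finsupp.notMem_support_iff.mp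
  rw [LaurentPolynomial.toLaurent_support]
  intro hmem
  obtain ⟨n, hn, hnj⟩ := Finset.mem_map.mp hmem
  have h1 : n ≤ ((Polynomial.X + 1 : Polynomial ℤ)^m).natDegree :=
    Polynomial.le_natDegree_of_mem_supp _ hn
  have hd : (Polynomial.X + 1 : Polynomial ℤ).natDegree = 1 := by
    simpa using Polynomial.natDegree_X_add_C (1:ℤ)
  rw [Polynomial.natDegree_pow, hd, mul_one] at h1
  have : (n : ℤ) = j := hnj
  omega

lemma term_coeff_eq (a b : ℕ) (i : ℤ) :
    (((-T 1 - 1 : LaurentPolynomial ℤ)^a * (-T (-1) - 1)^b : LaurentPolynomial ℤ)).coeff i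
      = (-1:ℤ)^(a+b) * (((T 1 + 1 : LaurentPolynomial ℤ))^(a+b)).coeff (i + b) := by
  rw [expandLem, ← single_eq_C_mul_T]
  have := AddMonoidAlgebra.coeff_single_mul_apply (((T 1 + 1 : LaurentPolynomial ℤ))^(a+b))
    ((-1:ℤ)^(a+b)) (-(b:ℤ)) i
  rw [this, neg_neg, add_comm ((b:ℤ)) i]

lemma term_coeff_zero (a b : ℕ) (i : ℤ) (hi : (a:ℤ) < i) :
    (((-T 1 - 1 : LaurentPolynomial ℤ)^a * (-T (-1) - 1)^b : LaurentPolynomial ℤ)).coeff i = 0 := by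
  rw [term_coeff_eq, coeff_T1add_pow_gt _ _ (by push_cast; omega), mul_zero]

lemma term_coeff_top (a b : ℕ) :
    (((-T 1 - 1 : LaurentPolynomial ℤ)^a * (-T (-1) - 1)^b : LaurentPolynomial ℤ)).coeff (a:ℤ) = (-1:ℤ)^(a+b) := by
  rw [term_coeff_eq]
  have h : ((a:ℤ) + b) = ((a+b : ℕ):ℤ) := by push_cast; ring
  rw [h, coeff_T1add_pow_self, mul_one]

lemma cc_surj {V : Type*} (G : SimpleGraph V) :
    Function.Surjective G.connectedComponentMk := fun c => Quot.exists_rep c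

lemma numComponents_le (V : Type*) [Fintype V] (s : Set (Sym2 V)) :
    numComponents V s ≤ Fintype.card V := by
  rw [numComponents, ← Nat.card_eq_fintype_card]
  exact Nat.card_le_card_of_surjective _ (cc_surj _)

lemma numComponents_empty (V : Type*) [Fintype V] :
    numComponents V (∅ : Set (Sym2 V)) = Fintype.card V := by
  rw [numComponents, ← Nat.card_eq_fintype_card]
  refine (Nat.card_eq_of_bijective _ ⟨fun u v h => ?_, cc_surj _⟩).symm
  have := SimpleGraph.ConnectedComponent.exact h
  rwa [SimpleGraph.fromEdgeSet_empty, SimpleGraph.reachable_bot] at this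

lemma numComponents_lt (V : Type*) [Fintype V] (s : Set (Sym2 V)) (u v : V)
    (huv : u ≠ v) (he : s(u, v) ∈ s) :
    numComponents V s < Fintype.card V := by
  refine lt_of_le_of_ne (numComponents_le V s) (fun hEq => ?_)
  set G := SimpleGraph.fromEdgeSet s
  have hcard : Nat.card V = Nat.card G.ConnectedComponent := by
    rw [Nat.card_eq_fintype_card, ← hEq, numComponents]
  have hbij : Function.Bijective G.connectedComponentMk :=
    (Nat.bijective_iff_surjective_and_card _).mpr ⟨cc_surj _, hcard⟩
  have hadj : G.Adj u v := by
    rw [SimpleGraph.fromEdgeSet_adj]; exact ⟨he, huv⟩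
  exact huv (hbij.1 (SimpleGraph.ConnectedComponent.connectedComponentMk_eq_of_adj hadj))

/-- For a connected loopless multigraph, the Laurent polynomial
`T_G(-t,-1/t)` has top degree exactly `|V| - 1`: the coefficient of `t^(|V|-1)` is
`(-1)^(|V|-1)`, and the coefficient of `t^i` vanishes for all `i ≥ |V|`. -/
theorem tutteEval_top_coeff {V E : Type*} [Fintype V] [Fintype E]
    (ε : E → Sym2 V)
    (hloopless : ∀ f : E, ¬ (ε f).IsDiag)
    (hconn : numComponents V (Set.range ε) = 1) :
    (tutteEval ε).coeff ((Fintype.card V : ℤ) - 1) = (-1) ^ (Fintype.card V - 1) ∧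
      ∀ i : ℤ, (Fintype.card V : ℤ) ≤ i → (tutteEval ε).coeff i = 0 := by
  classical
  set n := Fintype.card V with hn
  have hn1 : 1 ≤ n := hconn ▸ numComponents_le V (Set.range ε)
  have hsum : ∀ i : ℤ, (tutteEval ε).coeff i
      = ∑ F : Finset E, (((-T 1 - 1 : LaurentPolynomial ℤ) ^ (numComponents V (ε '' ↑F) - 1)
          * (-T (-1) - 1) ^ (F.card + numComponents V (ε '' ↑F) - n) : LaurentPolynomial ℤ)).coeff i := by
    intro i
    rw [tutteEval]
    simp only [hconn, ← hn]
    rw [AddMonoidAlgebra.coeff_sum, Finsupp.finset_sum_apply]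
  have hne_term : ∀ (F : Finset E), F ≠ ∅ → ∀ i : ℤ, ((n:ℤ) - 1) ≤ i →
      (((-T 1 - 1 : LaurentPolynomial ℤ) ^ (numComponents V (ε '' ↑F) - 1)
        * (-T (-1) - 1) ^ (F.card + numComponents V (ε '' ↑F) - n) : LaurentPolynomial ℤ)).coeff i = 0 := by
    intro F hF i hi
    obtain ⟨f, hf⟩ := Finset.nonempty_iff_ne_empty.mpr hF
    obtain ⟨⟨u, v⟩, hrep⟩ := Quot.exists_rep (ε f)
    have hεf : ε f = s(u, v) := hrep.symm
    have huv : u ≠ v := by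
      intro h
      exact hloopless f (by rw [hεf, h]; exact Sym2.mk_isDiag_iff.mpr rfl)
    have hmem : s(u, v) ∈ ε '' ↑F := ⟨f, by simpa using hf, hεf⟩
    have hlt : numComponents V (ε '' ↑F) < n := numComponents_lt V _ u v huv hmem
    have hn2 : 2 ≤ n := by
      rw [hn]
      exact Fintype.one_lt_card_iff_nontrivial.mpr ⟨u, v, huv⟩
    exact term_coeff_zero _ _ _ (by omega)
  have hempty : numComponents V (ε '' ↑(∅ : Finset E)) = n := by
    have h1 : (ε '' ↑(∅ : Finset E)) = ∅ := by simp
    rw [h1, numComponents_empty]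
  constructor
  · rw [hsum]
    rw [Finset.sum_eq_single_of_mem (∅ : Finset E) (Finset.mem_univ _)
      (fun F _ hF => hne_term F hF _ (le_refl _))]
    rw [hempty, Finset.card_empty]
    have hb : 0 + n - n = 0 := by omega
    have ha : ((n:ℤ) - 1) = ((n - 1 : ℕ) : ℤ) := by omega
    rw [hb, ha, term_coeff_top (n - 1) 0, add_zero]
  · intro i hi
    rw [hsum]
    apply Finset.sum_eq_zero
    intro F _
    by_cases hF : F = ∅
    · subst hF
      rw [hempty, Finset.card_empty]
      have hb : 0 + n - n = 0 := by omega
      rw [hb]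
      exact term_coeff_zero _ _ _ (by omega)
    · exact hne_term F hF i (by omega)
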